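/- In ℤ³ with basis e1, e2, e3 and form e_i²=0, e_i·e_j=2 (i≠j), if a class D satisfies D·e1 = D·e3 = 2 and D² = 0 and D ≠ e3 and D is in the lattice, and additionally D is fixed-determined by the constraints ι12*(e1)=e1, ι12*(e2)=e2, and ι12* preserves the intersection form, then ι12*(e3) = 2e1 + 2e2 − e3. -/
import Mathlib


/-- The intersection form on ℤ³ (basis e₁, e₂, e₃) with eᵢ² = 0 and eᵢ·eⱼ = 2 for i ≠ j. -/
def interForm (x y : Fin 3 → ℤ) : ℤ :=
  2 * (x 0 * y 1 + x 0 * y 2 + x 1 * y 0 + x 1 * y 2 + x 2 * y 0 + x 2 * y 1)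

/-- An involutive isometry of the lattice (ℤ³, interForm) fixing e₁ and e₂ and not
fixing e₃ must send e₃ to 2e₁ + 2e₂ − e₃. -/
theorem stmt_19 (σ : (Fin 3 → ℤ) →ₗ[ℤ] (Fin 3 → ℤ))
    (hinv : σ ∘ₗ σ = LinearMap.id)
    (hiso : ∀ x y : Fin 3 → ℤ, interForm (σ x) (σ y) = interForm x y)
    (h1 : σ ![1, 0, 0] = ![1, 0, 0])
    (h2 : σ ![0, 1, 0] = ![0, 1, 0])
    (h3 : σ ![0, 0, 1] ≠ ![0, 0, 1]) :
    σ ![0, 0, 1] = ![2, 2, -1] := by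
  set v := σ ![0, 0, 1] with hv
  have hA := hiso ![0, 0, 1] ![1, 0, 0]
  rw [h1, ← hv] at hA
  have hB := hiso ![0, 0, 1] ![0, 1, 0]
  rw [h2, ← hv] at hB
  have hC := hiso ![0, 0, 1] ![0, 0, 1]
  rw [← hv] at hC
  simp [interForm] at hA hB hC
  -- hA : v 1 + v 2 = 1 (up to form), etc.
  have hsq : v 2 * v 2 = 1 := by nlinarith [hA, hB, hC]
  have hv2 : v 2 = -1 := by
    rcases mul_self_eq_one_iff.mp hsq with h | h
    · exfalso
      apply h3
      funext i
      fin_cases i <;> simp <;> omega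
    · exact h
  funext i
  fin_cases i <;> simp <;> omega
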